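/- Let g: T_0 → T be a proper continuous surjection of locally compact Hausdorff spaces which is at most N-to-one, F a sheaf of abelian groups on T, and F^{n,a} the alternating subsheaves of F^n = (g_n)_*(g_n^* F) supported on the free part. Then (F^{n,a})_n is a subcomplex of the cosimplicial complex (F^n)_n which vanishes in degrees above N, and the augmented complex 0 → F → F^{0,a} → F^{1,a} → ⋯ → F^{N,a} → 0 is exact; equivalently, at each stalk t ∈ T with Z_t = g^{-1}(t) finite of cardinality at most N+1, the augmented complex 0 → F_t → F^{0,a}_t → ⋯ → F^{N,a}_t → 0 is exact, where F^{n,a}_t = {f ∈ C(Z_t^{n+1}, F_t) : supp f ⊆ Z_t^{n+1} ∖ D_{n+1}, s·f = (−1)^{|s|} f for all s ∈ S_{n+1}} and D_{n+1} is the union of non-free S_{n+1}-orbits. -/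

import Mathlib

structure EtaleSheaf (X : Type) [TopologicalSpace X] where
  E : Type
  tE : TopologicalSpace E
  proj : E → X
  etale : @IsLocalHomeomorph E X tE _ proj

attribute [instance] EtaleSheaf.tE

structure AbEtaleSheaf (X : Type) [TopologicalSpace X] extends EtaleSheaf X where
  add : E → E → E
  zero : X → E
  neg : E → E
  proj_add : ∀ e e', proj e = proj e' → proj (add e e') = proj e
  proj_zero : ∀ x, proj (zero x) = x
  proj_neg : ∀ e, proj (neg e) = proj e
  add_assoc : ∀ e e' e'', proj e = proj e' → proj e' = proj e'' →
    add (add e e') e'' = add e (add e' e'')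
  add_comm : ∀ e e', proj e = proj e' → add e e' = add e' e
  add_zero : ∀ e, add e (zero (proj e)) = e
  add_neg : ∀ e, add e (neg e) = zero (proj e)
  continuous_zero : Continuous zero
  continuous_neg : Continuous neg
  continuous_add : ContinuousOn (fun p : E × E => add p.1 p.2) {p | proj p.1 = proj p.2}

namespace AbEtaleSheaf

variable {X : Type} [TopologicalSpace X]

def Sect (F : AbEtaleSheaf X) (U : Set X) : Type :=
  {s : U → F.E // Continuous s ∧ ∀ x : U, F.proj (s x) = x}

def suppSect (F : AbEtaleSheaf X) {U : Set X} (s : F.Sect U) : Set X :=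
  Subtype.val '' {x : U | s.1 x ≠ F.zero x}

def Stalk (F : AbEtaleSheaf X) (x : X) : Type := {e : F.E // F.proj e = x}

lemma zero_add' (F : AbEtaleSheaf X) (e : F.E) : F.add (F.zero (F.proj e)) e = e := by
  rw [F.add_comm _ _ (by rw [F.proj_zero])]
  exact F.add_zero e

lemma neg_add' (F : AbEtaleSheaf X) (e : F.E) : F.add (F.neg e) e = F.zero (F.proj e) := by
  rw [F.add_comm _ _ (by rw [F.proj_neg])]
  exact F.add_neg e

noncomputable instance stalkZero (F : AbEtaleSheaf X) (x : X) : Zero (F.Stalk x) :=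
  ⟨⟨F.zero x, F.proj_zero x⟩⟩

noncomputable instance stalkAdd (F : AbEtaleSheaf X) (x : X) : Add (F.Stalk x) :=
  ⟨fun e e' => ⟨F.add e.1 e'.1, by rw [F.proj_add e.1 e'.1 (by rw [e.2, e'.2]), e.2]⟩⟩

noncomputable instance stalkNeg (F : AbEtaleSheaf X) (x : X) : Neg (F.Stalk x) :=
  ⟨fun e => ⟨F.neg e.1, by rw [F.proj_neg, e.2]⟩⟩

noncomputable instance (F : AbEtaleSheaf X) (x : X) : AddCommGroup (F.Stalk x) where
  add := (· + ·)
  zero := 0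
  neg := Neg.neg
  add_assoc e e' e'' := Subtype.ext
    (F.add_assoc _ _ _ (by rw [e.2, e'.2]) (by rw [e'.2, e''.2]))
  zero_add := fun ⟨e, he⟩ => Subtype.ext (by subst he; exact F.zero_add' e)
  add_zero := fun ⟨e, he⟩ => Subtype.ext (by subst he; exact F.add_zero e)
  neg_add_cancel := fun ⟨e, he⟩ => Subtype.ext (by subst he; exact F.neg_add' e)
  add_comm e e' := Subtype.ext (F.add_comm e.1 e'.1 (by rw [e.2, e'.2]))
  nsmul := nsmulRec
  zsmul := zsmulRec

end AbEtaleSheaf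

/-- The coboundary map `C(Z^{n+1}, M) → C(Z^{n+2}, M)` of the cosimplicial abelian
group of functions on tuples: `(δ φ)(f) = ∑_i (−1)^i φ(f ∘ δ_i)`. -/
def cosimplicialCoboundary (Z M : Type) [AddCommGroup M] (n : ℕ) :
    ((Fin (n + 1) → Z) → M) →+ ((Fin (n + 2) → Z) → M) :=
  AddMonoidHom.mk'
    (fun φ f => ∑ i : Fin (n + 2), ((-1 : ℤ) ^ (i : ℕ)) • φ (f ∘ i.succAbove))
    (by
      intro φ ψ
      funext f
      simp [smul_add, Finset.sum_add_distrib])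

/-- The augmentation `M → C(Z, M)` by constant functions. -/
def cosimplicialAugmentation (Z M : Type) [AddCommGroup M] :
    M →+ ((Fin 1 → Z) → M) :=
  AddMonoidHom.mk' (fun c _ => c) (by intro a b; rfl)

/-- The alternating subgroup `F^{n,a}_t ⊆ C(Z^{n+1}, M)`: functions supported on the
injective (free-orbit) tuples which transform by the sign character of `S_{n+1}`. -/
def alternatingSubgroup (Z M : Type) [AddCommGroup M] (n : ℕ) :
    AddSubgroup ((Fin (n + 1) → Z) → M) where
  carrier := {φ | (∀ f : Fin (n + 1) → Z, ¬ Function.Injective f → φ f = 0) ∧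
    ∀ (σ : Equiv.Perm (Fin (n + 1))) (f : Fin (n + 1) → Z),
      φ (f ∘ σ) = ((Equiv.Perm.sign σ : ℤˣ) : ℤ) • φ f}
  add_mem' := by
    rintro φ ψ ⟨h1, h2⟩ ⟨h3, h4⟩
    refine ⟨fun f hf => ?_, fun σ f => ?_⟩
    · simp [h1 f hf, h3 f hf]
    · simp [h2 σ f, h4 σ f, smul_add]
  zero_mem' := by
    refine ⟨fun f _ => rfl, fun σ f => ?_⟩
    simp
  neg_mem' := by
    rintro φ ⟨h1, h2⟩
    refine ⟨fun f hf => ?_, fun σ f => ?_⟩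
    · simp [h1 f hf]
    · simp [h2 σ f]

section AuxAlternating

open Finset

variable {Z M : Type} [AddCommGroup M]

private lemma coboundary_apply (n : ℕ) (φ : (Fin (n + 1) → Z) → M) (f : Fin (n + 2) → Z) :
    cosimplicialCoboundary Z M n φ f
      = ∑ i : Fin (n + 2), ((-1 : ℤ) ^ (i : ℕ)) • φ (f ∘ i.succAbove) := rfl

private lemma val_succAbove' {m : ℕ} (j : Fin (m + 1)) (k : Fin m) :
    ((j.succAbove k : Fin (m + 1)) : ℕ)
      = if (k : ℕ) < (j : ℕ) then (k : ℕ) else (k : ℕ) + 1 := by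
  unfold Fin.succAbove
  split_ifs with h1 h2 h2 <;>
    simp_all [Fin.lt_def, Fin.coe_castSucc, Fin.val_succ]

private lemma val_swap' {m : ℕ} (a b x : Fin m) :
    ((Equiv.swap a b x : Fin m) : ℕ)
      = if (x : ℕ) = (a : ℕ) then (b : ℕ)
        else if (x : ℕ) = (b : ℕ) then (a : ℕ) else (x : ℕ) := by
  rw [Equiv.swap_apply_def]
  split_ifs <;> simp_all [Fin.ext_iff]

private lemma sign_smul_of_swaps {m : ℕ} (φ : (Fin m → Z) → M)
    (h : ∀ a b : Fin m, a ≠ b → ∀ f, φ (f ∘ Equiv.swap a b) = -φ f) :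
    ∀ (σ : Equiv.Perm (Fin m)) (f : Fin m → Z),
      φ (f ∘ σ) = ((Equiv.Perm.sign σ : ℤˣ) : ℤ) • φ f := by
  intro σ
  refine Equiv.Perm.swap_induction_on
    (motive := fun σ => ∀ f : Fin m → Z,
      φ (f ∘ ⇑σ) = ((Equiv.Perm.sign σ : ℤˣ) : ℤ) • φ f) σ ?_ ?_
  · intro f; simp
  · intro π x y hxy IH f
    have hc : f ∘ ⇑(Equiv.swap x y * π) = (f ∘ ⇑(Equiv.swap x y)) ∘ ⇑π := by
      funext k; simp [Equiv.Perm.mul_apply]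
    rw [hc, IH, h x y hxy f, Equiv.Perm.sign_mul, Equiv.Perm.sign_swap hxy]
    simp [mul_smul]

private lemma swaps_of_adjacent {m : ℕ} (φ : (Fin m → Z) → M)
    (h : ∀ (i : ℕ) (hi : i + 1 < m) (f : Fin m → Z),
      φ (f ∘ Equiv.swap ⟨i, Nat.lt_of_succ_lt hi⟩ ⟨i + 1, hi⟩) = -φ f) :
    ∀ a b : Fin m, a ≠ b → ∀ f, φ (f ∘ Equiv.swap a b) = -φ f := by
  have key : ∀ d (a b : Fin m), (a : ℕ) < (b : ℕ) → (b : ℕ) - (a : ℕ) ≤ d + 1 →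
      ∀ f, φ (f ∘ Equiv.swap a b) = -φ f := by
    intro d
    induction d with
    | zero =>
      intro a b hab hd f
      have hblt : (a : ℕ) + 1 < m := by
        have := b.isLt; omega
      have hb : b = ⟨(a : ℕ) + 1, hblt⟩ := Fin.ext (by simp; omega)
      rw [hb]
      exact h (a : ℕ) hblt f
    | succ d IH =>
      intro a b hab hd f
      by_cases hd' : (b : ℕ) - (a : ℕ) ≤ d + 1
      · exact IH a b hab hd' f
      · have hblt : (a : ℕ) + 1 < m := by have := b.isLt; omega
        set a' : Fin m := ⟨(a : ℕ) + 1, hblt⟩ with ha'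
        have hval : (a' : ℕ) = (a : ℕ) + 1 := by rw [ha']
        have ha'b : (a' : ℕ) < (b : ℕ) := by omega
        have hba' : b ≠ a' := fun hh => by rw [hh] at ha'b; omega
        have hba : b ≠ a := fun hh => by
          rw [hh] at hab; exact Nat.lt_irrefl _ hab
        have hswap : Equiv.swap a b
            = Equiv.swap a' a * Equiv.swap b a' * Equiv.swap a' a :=
          (Equiv.swap_mul_swap_mul_swap hba' hba).symm
        have hcomp : f ∘ ⇑(Equiv.swap a b)
            = ((f ∘ ⇑(Equiv.swap a' a)) ∘ ⇑(Equiv.swap b a')) ∘ ⇑(Equiv.swap a' a) := by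
          rw [hswap]; rfl
        have hAdj : ∀ g : Fin m → Z, φ (g ∘ ⇑(Equiv.swap a' a)) = -φ g := by
          intro g
          rw [Equiv.swap_comm]
          exact h (a : ℕ) hblt g
        have hMid := IH a' b ha'b (by omega) (f ∘ ⇑(Equiv.swap a' a))
        rw [hcomp, hAdj, Equiv.swap_comm b a', hMid, hAdj]
        simp
  intro a b hab f
  have hne : (a : ℕ) ≠ (b : ℕ) := fun hh => hab (Fin.ext hh)
  rcases Nat.lt_or_ge (a : ℕ) (b : ℕ) with hlt | hge
  · exact key ((b : ℕ)) a b hlt (by omega) f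
  · rw [Equiv.swap_comm]
    exact key ((a : ℕ)) b a (by omega) (by omega) f

end AuxAlternating
section AuxAlternating2

open Finset

variable {Z M : Type} [AddCommGroup M]

private lemma coboundary_adjacent_anti {n : ℕ} (φ : (Fin (n + 1) → Z) → M)
    (h2 : ∀ (σ : Equiv.Perm (Fin (n + 1))) (f : Fin (n + 1) → Z),
      φ (f ∘ σ) = ((Equiv.Perm.sign σ : ℤˣ) : ℤ) • φ f)
    (i : Fin (n + 1)) (f : Fin (n + 2) → Z) :
    cosimplicialCoboundary Z M n φ (f ∘ Equiv.swap i.castSucc i.succ)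
      = - cosimplicialCoboundary Z M n φ f := by
  have claim : ∀ j : Fin (n + 2),
      ((-1 : ℤ) ^ (j : ℕ)) • φ ((f ∘ ⇑(Equiv.swap i.castSucc i.succ)) ∘ j.succAbove)
        = -(((-1 : ℤ) ^ ((Equiv.swap i.castSucc i.succ j : Fin (n + 2)) : ℕ)) •
            φ (f ∘ (Equiv.swap i.castSucc i.succ j : Fin (n + 2)).succAbove)) := by
    intro j
    by_cases hj1 : j = i.castSucc
    · subst hj1
      rw [Equiv.swap_apply_left]
      have hfun : (f ∘ ⇑(Equiv.swap i.castSucc i.succ)) ∘ (i.castSucc).succAbove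
          = f ∘ (i.succ).succAbove := by
        funext k
        show f (Equiv.swap i.castSucc i.succ ((i.castSucc).succAbove k))
          = f ((i.succ).succAbove k)
        refine congrArg f (Fin.ext ?_)
        simp only [val_swap', val_succAbove', Fin.coe_castSucc, Fin.val_succ]
        split_ifs <;> omega
      rw [hfun, Fin.coe_castSucc, Fin.val_succ, pow_succ, mul_neg_one, neg_smul, neg_neg]
    · by_cases hj2 : j = i.succ
      · subst hj2
        rw [Equiv.swap_apply_right]
        have hfun : (f ∘ ⇑(Equiv.swap i.castSucc i.succ)) ∘ (i.succ).succAbove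
            = f ∘ (i.castSucc).succAbove := by
          funext k
          show f (Equiv.swap i.castSucc i.succ ((i.succ).succAbove k))
            = f ((i.castSucc).succAbove k)
          refine congrArg f (Fin.ext ?_)
          simp only [val_swap', val_succAbove', Fin.coe_castSucc, Fin.val_succ]
          split_ifs <;> omega
        rw [hfun, Fin.coe_castSucc, Fin.val_succ, pow_succ, mul_neg_one, neg_smul]
      · rw [Equiv.swap_apply_of_ne_of_ne hj1 hj2]
        obtain ⟨a', ha'⟩ := Fin.exists_succAbove_eq
          (show i.castSucc ≠ j from fun hh => hj1 hh.symm)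
        obtain ⟨b', hb'⟩ := Fin.exists_succAbove_eq
          (show i.succ ≠ j from fun hh => hj2 hh.symm)
        have hab : a' ≠ b' := by
          intro hh
          apply (Fin.castSucc_lt_succ (i := i)).ne
          rw [← ha', ← hb', hh]
        have hfun : (f ∘ ⇑(Equiv.swap i.castSucc i.succ)) ∘ j.succAbove
            = (f ∘ j.succAbove) ∘ ⇑(Equiv.swap a' b') := by
          funext k
          show f (Equiv.swap i.castSucc i.succ (j.succAbove k))
            = f (j.succAbove (Equiv.swap a' b' k))
          rw [← ha', ← hb',
            Function.Injective.swap_apply (Fin.succAbove_right_injective)]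
        rw [hfun, h2 (Equiv.swap a' b'), Equiv.Perm.sign_swap hab]
        simp [smul_smul]
  calc cosimplicialCoboundary Z M n φ (f ∘ ⇑(Equiv.swap i.castSucc i.succ))
      = ∑ j : Fin (n + 2), ((-1 : ℤ) ^ (j : ℕ)) •
          φ ((f ∘ ⇑(Equiv.swap i.castSucc i.succ)) ∘ j.succAbove) :=
        coboundary_apply n φ _
    _ = ∑ j : Fin (n + 2),
          -(((-1 : ℤ) ^ ((Equiv.swap i.castSucc i.succ j : Fin (n + 2)) : ℕ)) •
            φ (f ∘ (Equiv.swap i.castSucc i.succ j : Fin (n + 2)).succAbove)) :=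
        Finset.sum_congr rfl fun j _ => claim j
    _ = -∑ j : Fin (n + 2),
          ((-1 : ℤ) ^ ((Equiv.swap i.castSucc i.succ j : Fin (n + 2)) : ℕ)) •
            φ (f ∘ (Equiv.swap i.castSucc i.succ j : Fin (n + 2)).succAbove) := by
        rw [Finset.sum_neg_distrib]
    _ = -∑ k : Fin (n + 2), ((-1 : ℤ) ^ (k : ℕ)) • φ (f ∘ k.succAbove) := by
        rw [Equiv.sum_comp (Equiv.swap i.castSucc i.succ)
          (fun k : Fin (n + 2) => ((-1 : ℤ) ^ (k : ℕ)) • φ (f ∘ k.succAbove))]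
    _ = - cosimplicialCoboundary Z M n φ f := by rw [coboundary_apply]

private lemma coboundary_adjrep {n : ℕ} (φ : (Fin (n + 1) → Z) → M)
    (h1 : ∀ f : Fin (n + 1) → Z, ¬Function.Injective f → φ f = 0)
    (i : Fin (n + 1)) (f : Fin (n + 2) → Z) (hf : f i.castSucc = f i.succ) :
    cosimplicialCoboundary Z M n φ f = 0 := by
  have hzero : ∀ j ∈ (Finset.univ : Finset (Fin (n + 2))),
      j ∉ ({i.castSucc, i.succ} : Finset (Fin (n + 2))) →
      ((-1 : ℤ) ^ (j : ℕ)) • φ (f ∘ j.succAbove) = 0 := by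
    intro j _ hj
    simp only [Finset.mem_insert, Finset.mem_singleton, not_or] at hj
    obtain ⟨a', ha'⟩ := Fin.exists_succAbove_eq (Ne.symm hj.1)
    obtain ⟨b', hb'⟩ := Fin.exists_succAbove_eq (Ne.symm hj.2)
    have hab : a' ≠ b' := by
      intro hh
      apply (Fin.castSucc_lt_succ (i := i)).ne
      rw [← ha', ← hb', hh]
    have : φ (f ∘ j.succAbove) = 0 := by
      apply h1
      intro hinj
      apply hab
      apply hinj
      show f (j.succAbove a') = f (j.succAbove b')
      rw [ha', hb', hf]
    rw [this, smul_zero]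
  rw [coboundary_apply, ← Finset.sum_subset (Finset.subset_univ _) hzero,
    Finset.sum_pair (Fin.castSucc_lt_succ (i := i)).ne]
  have hfun : f ∘ (i.castSucc).succAbove = f ∘ (i.succ).succAbove := by
    funext k
    rcases lt_trichotomy (k : ℕ) (i : ℕ) with hk | hk | hk
    · refine congrArg f (Fin.ext ?_)
      simp only [val_succAbove', Fin.coe_castSucc, Fin.val_succ]
      split_ifs <;> omega
    · have hki : k = i := Fin.ext hk
      subst hki
      show f ((k.castSucc).succAbove k) = f ((k.succ).succAbove k)
      rw [Fin.succAbove_castSucc_self, Fin.succAbove_succ_self]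
      exact hf.symm
    · refine congrArg f (Fin.ext ?_)
      simp only [val_succAbove', Fin.coe_castSucc, Fin.val_succ]
      split_ifs <;> omega
  rw [hfun, Fin.coe_castSucc, Fin.val_succ, pow_succ, mul_neg_one, neg_smul,
    add_neg_cancel]

private lemma coboundary_mem {n : ℕ} (φ : (Fin (n + 1) → Z) → M)
    (hφ : φ ∈ alternatingSubgroup Z M n) :
    cosimplicialCoboundary Z M n φ ∈ alternatingSubgroup Z M (n + 1) := by
  obtain ⟨h1, h2⟩ := hφ
  have hanti : ∀ a b : Fin (n + 2), a ≠ b → ∀ f : Fin (n + 2) → Z,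
      cosimplicialCoboundary Z M n φ (f ∘ Equiv.swap a b)
        = - cosimplicialCoboundary Z M n φ f := by
    apply swaps_of_adjacent
    intro i hi f
    exact coboundary_adjacent_anti φ h2 ⟨i, by omega⟩ f
  refine ⟨?_, sign_smul_of_swaps _ hanti⟩
  intro f hfinj
  rw [Function.not_injective_iff] at hfinj
  obtain ⟨a0, b0, hab0, hne0⟩ := hfinj
  obtain ⟨a, b, hab, hlt⟩ :
      ∃ a b : Fin (n + 2), f a = f b ∧ (a : ℕ) < (b : ℕ) := by
    rcases Nat.lt_or_ge (a0 : ℕ) (b0 : ℕ) with hc | hc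
    · exact ⟨a0, b0, hab0, hc⟩
    · refine ⟨b0, a0, hab0.symm, ?_⟩
      rcases Nat.lt_or_ge (b0 : ℕ) (a0 : ℕ) with hc' | hc'
      · exact hc'
      · exact absurd (Fin.ext (Nat.le_antisymm hc' hc)) hne0
  have hi1 : (a : ℕ) < n + 1 := by have := b.isLt; omega
  have hp1 : (a : ℕ) + 1 < n + 2 := by omega
  set i : Fin (n + 1) := ⟨(a : ℕ), hi1⟩ with hidef
  set p : Fin (n + 2) := ⟨(a : ℕ) + 1, hp1⟩ with hpdef
  have hrep : (f ∘ ⇑(Equiv.swap p b)) i.castSucc = (f ∘ ⇑(Equiv.swap p b)) i.succ := by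
    have hca : i.castSucc = a := Fin.ext rfl
    have hsi : i.succ = p := Fin.ext rfl
    show f (Equiv.swap p b i.castSucc) = f (Equiv.swap p b i.succ)
    rw [hca, hsi, Equiv.swap_apply_left]
    rw [Equiv.swap_apply_of_ne_of_ne
      (show a ≠ p from fun hh => by
        have h' : (a : ℕ) = (a : ℕ) + 1 := congrArg Fin.val hh
        omega)
      (show a ≠ b from fun hh => by rw [hh] at hlt; omega)]
    exact hab
  have key := coboundary_adjrep φ h1 i (f ∘ ⇑(Equiv.swap p b)) hrep
  by_cases hpb : p = b
  · rw [hpb, Equiv.swap_self] at key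
    simpa using key
  · have hanti' := hanti p b hpb f
    rw [key] at hanti'
    exact neg_eq_zero.mp hanti'.symm

private lemma alt_eq_bot {n : ℕ} [Finite Z] (hcard : Nat.card Z ≤ n) :
    alternatingSubgroup Z M n = ⊥ := by
  rw [AddSubgroup.eq_bot_iff_forall]
  intro φ hφ
  funext f
  refine hφ.1 f fun hinj => ?_
  have hle := Nat.card_le_card_of_injective f hinj
  rw [Nat.card_eq_fintype_card, Fintype.card_fin] at hle
  omega

end AuxAlternating2
section AuxAlternating3

open Finset

variable {Z M : Type} [AddCommGroup M]

private lemma succAbove_succAbove' {n : ℕ} (j : Fin (n + 3)) (i : Fin (n + 2))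
    (j' : Fin (n + 3)) (i' : Fin (n + 2)) (hij : (i : ℕ) < (j : ℕ))
    (hj' : (j' : ℕ) = (i : ℕ)) (hi' : (i' : ℕ) = (j : ℕ) - 1) (k : Fin (n + 1)) :
    j.succAbove (i.succAbove k) = j'.succAbove (i'.succAbove k) := by
  apply Fin.ext
  simp only [val_succAbove', hj', hi']
  split_ifs <;> omega

private def altInvol (n : ℕ) (p : Fin (n + 3) × Fin (n + 2)) :
    Fin (n + 3) × Fin (n + 2) :=
  if h : (p.2 : ℕ) < (p.1 : ℕ)
  then (⟨(p.2 : ℕ), by have := p.2.isLt; omega⟩,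
        ⟨(p.1 : ℕ) - 1, by have := p.1.isLt; omega⟩)
  else (⟨(p.2 : ℕ) + 1, by have := p.2.isLt; omega⟩,
        ⟨(p.1 : ℕ), by have := p.2.isLt; omega⟩)

private lemma altInvol_fst (n : ℕ) (p : Fin (n + 3) × Fin (n + 2)) :
    (((altInvol n p).1 : Fin (n + 3)) : ℕ)
      = if (p.2 : ℕ) < (p.1 : ℕ) then (p.2 : ℕ) else (p.2 : ℕ) + 1 := by
  unfold altInvol; split_ifs <;> rfl

private lemma altInvol_snd (n : ℕ) (p : Fin (n + 3) × Fin (n + 2)) :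
    (((altInvol n p).2 : Fin (n + 2)) : ℕ)
      = if (p.2 : ℕ) < (p.1 : ℕ) then (p.1 : ℕ) - 1 else (p.1 : ℕ) := by
  unfold altInvol; split_ifs <;> rfl

private lemma term_cancel {n : ℕ} (ψ : (Fin (n + 1) → Z) → M) (f : Fin (n + 3) → Z)
    (j j' : Fin (n + 3)) (i i' : Fin (n + 2)) (hij : (i : ℕ) < (j : ℕ))
    (hj' : (j' : ℕ) = (i : ℕ)) (hi' : (i' : ℕ) = (j : ℕ) - 1) :
    ((-1 : ℤ) ^ ((j : ℕ) + (i : ℕ))) • ψ ((f ∘ j.succAbove) ∘ i.succAbove)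
      + ((-1 : ℤ) ^ ((j' : ℕ) + (i' : ℕ))) • ψ ((f ∘ j'.succAbove) ∘ i'.succAbove) = 0 := by
  have harg : (f ∘ j.succAbove) ∘ i.succAbove = (f ∘ j'.succAbove) ∘ i'.succAbove := by
    funext k
    exact congrArg f (succAbove_succAbove' j i j' i' hij hj' hi' k)
  have hexp : (j : ℕ) + (i : ℕ) = ((j' : ℕ) + (i' : ℕ)) + 1 := by omega
  rw [harg, hexp, pow_succ, mul_neg_one, neg_smul, neg_add_cancel]

private lemma coboundary_coboundary {n : ℕ} (ψ : (Fin (n + 1) → Z) → M)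
    (f : Fin (n + 3) → Z) :
    cosimplicialCoboundary Z M (n + 1) (cosimplicialCoboundary Z M n ψ) f = 0 := by
  have expand : cosimplicialCoboundary Z M (n + 1) (cosimplicialCoboundary Z M n ψ) f
      = ∑ p : Fin (n + 3) × Fin (n + 2),
          ((-1 : ℤ) ^ ((p.1 : ℕ) + (p.2 : ℕ))) •
            ψ ((f ∘ p.1.succAbove) ∘ p.2.succAbove) := by
    rw [coboundary_apply]
    calc ∑ j : Fin (n + 3), ((-1 : ℤ) ^ (j : ℕ)) •
            cosimplicialCoboundary Z M n ψ (f ∘ j.succAbove)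
        = ∑ j : Fin (n + 3), ∑ i : Fin (n + 2),
            ((-1 : ℤ) ^ ((j : ℕ) + (i : ℕ))) • ψ ((f ∘ j.succAbove) ∘ i.succAbove) := by
          refine Finset.sum_congr rfl fun j _ => ?_
          rw [coboundary_apply, Finset.smul_sum]
          exact Finset.sum_congr rfl fun i _ => by rw [smul_smul, pow_add]
      _ = ∑ p : Fin (n + 3) × Fin (n + 2),
            ((-1 : ℤ) ^ ((p.1 : ℕ) + (p.2 : ℕ))) •
              ψ ((f ∘ p.1.succAbove) ∘ p.2.succAbove) :=
          (Fintype.sum_prod_type (fun p : Fin (n + 3) × Fin (n + 2) =>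
            ((-1 : ℤ) ^ ((p.1 : ℕ) + (p.2 : ℕ))) •
              ψ ((f ∘ p.1.succAbove) ∘ p.2.succAbove))).symm
  rw [expand]
  refine Finset.sum_ninvolution (altInvol n) ?_ ?_ (fun _ => Finset.mem_univ _) ?_
  · intro p
    by_cases h : (p.2 : ℕ) < (p.1 : ℕ)
    · refine term_cancel ψ f p.1 (altInvol n p).1 p.2 (altInvol n p).2 h ?_ ?_
      · rw [altInvol_fst, if_pos h]
      · rw [altInvol_snd, if_pos h]
    · rw [add_comm]
      refine term_cancel ψ f (altInvol n p).1 p.1 (altInvol n p).2 p.2 ?_ ?_ ?_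
      · rw [altInvol_fst, if_neg h, altInvol_snd, if_neg h]; omega
      · rw [altInvol_snd, if_neg h]
      · rw [altInvol_fst, if_neg h]; omega
  · intro p _ heq
    have := congrArg (fun q : Fin (n + 3) × Fin (n + 2) => ((q.1 : Fin (n + 3)) : ℕ)) heq
    rw [altInvol_fst] at this
    split_ifs at this <;> omega
  · intro p
    refine Prod.ext (Fin.ext ?_) (Fin.ext ?_)
    · rw [altInvol_fst, altInvol_fst, altInvol_snd]
      split_ifs <;> omega
    · rw [altInvol_snd, altInvol_fst, altInvol_snd]
      split_ifs <;> omega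

end AuxAlternating3
section AuxAlternating4

open Finset

variable {Z M : Type} [AddCommGroup M]

private lemma aug_mem [Nonempty Z] (c : M) :
    cosimplicialAugmentation Z M c ∈ alternatingSubgroup Z M 0 := by
  refine ⟨fun f hf => absurd (fun a b _ => Fin.ext (by omega)) hf, fun σ f => ?_⟩
  have hσ : σ = 1 := Equiv.ext fun x => Fin.ext (by omega)
  subst hσ
  simp [cosimplicialAugmentation]

private lemma exactness_zero [Nonempty Z] (φ : (Fin 1 → Z) → M) :
    cosimplicialCoboundary Z M 0 φ = 0 ↔
      ∃ c : M, φ = cosimplicialAugmentation Z M c := by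
  have hone : ((0 : Fin 2).succAbove : Fin 1 → Fin 2) 0 = 1 := rfl
  have hzero : ((1 : Fin 2).succAbove : Fin 1 → Fin 2) 0 = 0 := rfl
  constructor
  · intro hd
    set z₀ : Z := Classical.arbitrary Z with hz
    refine ⟨φ (fun _ => z₀), ?_⟩
    funext u
    have huniq : u = fun _ => u 0 := funext fun x => by
      have hx : x = 0 := Subsingleton.elim _ _
      rw [hx]
    set f : Fin 2 → Z := Fin.cons (u 0) (fun _ => z₀) with hfdef
    have h0 := congrFun hd f
    rw [coboundary_apply, Fin.sum_univ_two] at h0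
    have e0 : f ∘ (0 : Fin 2).succAbove = fun _ : Fin 1 => z₀ := by
      funext k
      have hk : k = 0 := Subsingleton.elim _ _
      subst hk
      show f ((0 : Fin 2).succAbove 0) = z₀
      rw [hone]
      rfl
    have e1 : f ∘ (1 : Fin 2).succAbove = fun _ : Fin 1 => u 0 := by
      funext k
      have hk : k = 0 := Subsingleton.elim _ _
      subst hk
      show f ((1 : Fin 2).succAbove 0) = u 0
      rw [hzero]
      rfl
    rw [e0, e1] at h0
    simp only [Fin.val_zero, pow_zero, one_smul, Fin.val_one, pow_one, neg_smul,
      Pi.zero_apply] at h0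
    show φ u = φ (fun _ => z₀)
    rw [huniq]
    exact (add_neg_eq_zero.mp h0).symm
  · rintro ⟨c, rfl⟩
    funext f
    rw [coboundary_apply, Fin.sum_univ_two]
    show ((-1 : ℤ) ^ ((0 : Fin 2) : ℕ)) • c + ((-1 : ℤ) ^ ((1 : Fin 2) : ℕ)) • c
      = (0 : M)
    simp

private lemma exactness_pos {n : ℕ} [Nonempty Z] (φ : (Fin (n + 2) → Z) → M)
    (hφ : φ ∈ alternatingSubgroup Z M (n + 1))
    (hd : cosimplicialCoboundary Z M (n + 1) φ = 0) :
    ∃ ψ ∈ alternatingSubgroup Z M n, cosimplicialCoboundary Z M n ψ = φ := by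
  obtain ⟨h1, h2⟩ := hφ
  set z₀ : Z := Classical.arbitrary Z with hz
  refine ⟨fun f => φ (Fin.cons z₀ f), ⟨?_, ?_⟩, ?_⟩
  · -- supported on injective tuples
    intro f hf
    apply h1
    rw [Function.not_injective_iff] at hf ⊢
    obtain ⟨a, b, hab, hne⟩ := hf
    exact ⟨a.succ, b.succ, by simpa [Fin.cons_succ] using hab,
      fun hh => hne (Fin.succ_injective _ hh)⟩
  · -- sign equivariance
    refine sign_smul_of_swaps (fun f => φ (Fin.cons z₀ f)) ?_
    intro a b hab f
    have hfun : (Fin.cons z₀ (f ∘ ⇑(Equiv.swap a b)) : Fin (n + 2) → Z)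
        = Fin.cons z₀ f ∘ ⇑(Equiv.swap a.succ b.succ) := by
      funext k
      induction k using Fin.cases with
      | zero =>
        rw [Fin.cons_zero, Function.comp_apply,
          Equiv.swap_apply_of_ne_of_ne (Fin.succ_ne_zero a).symm
            (Fin.succ_ne_zero b).symm, Fin.cons_zero]
      | succ l =>
        rw [Fin.cons_succ, Function.comp_apply, Function.comp_apply,
          Function.Injective.swap_apply (Fin.succ_injective _), Fin.cons_succ]
    show φ (Fin.cons z₀ (f ∘ ⇑(Equiv.swap a b))) = -φ (Fin.cons z₀ f)
    rw [hfun, h2 (Equiv.swap a.succ b.succ),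
      Equiv.Perm.sign_swap (fun hh => hab (Fin.succ_injective _ hh))]
    simp
  · -- coboundary of homotopy gives back φ
    funext f
    have h0 := congrFun hd (Fin.cons z₀ f)
    rw [coboundary_apply, Fin.sum_univ_succ] at h0
    have hcons0 : (Fin.cons z₀ f : Fin (n + 3) → Z) ∘ (0 : Fin (n + 3)).succAbove = f := by
      funext k
      simp [Fin.succAbove_zero]
    have hcons : ∀ j : Fin (n + 2),
        (Fin.cons z₀ f : Fin (n + 3) → Z) ∘ (j.succ).succAbove
          = Fin.cons z₀ (f ∘ j.succAbove) := by
      intro j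
      funext k
      induction k using Fin.cases with
      | zero => simp
      | succ l => simp [Fin.succ_succAbove_succ]
    rw [hcons0] at h0
    simp only [Pi.zero_apply, Fin.val_zero, pow_zero, one_smul] at h0
    have hs : ∑ i : Fin (n + 2), ((-1 : ℤ) ^ ((i.succ : Fin (n + 3)) : ℕ)) •
          φ (Fin.cons z₀ f ∘ (i.succ).succAbove)
        = ∑ j : Fin (n + 2), ((-1 : ℤ) ^ ((j : ℕ) + 1)) •
            φ (Fin.cons z₀ (f ∘ j.succAbove)) :=
      Finset.sum_congr rfl fun j _ => by rw [hcons j, Fin.val_succ]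
    rw [hs] at h0
    have h0' := h0
    rw [coboundary_apply]
    have hsum : ∑ j : Fin (n + 2),
        ((-1 : ℤ) ^ ((j : ℕ) + 1)) • φ (Fin.cons z₀ (f ∘ j.succAbove))
        = -∑ j : Fin (n + 2),
            ((-1 : ℤ) ^ (j : ℕ)) • φ (Fin.cons z₀ (f ∘ j.succAbove)) := by
      rw [← Finset.sum_neg_distrib]
      exact Finset.sum_congr rfl fun j _ => by
        rw [pow_succ, mul_neg_one, neg_smul]
    rw [hsum] at h0'
    exact (add_neg_eq_zero.mp h0').symm
end AuxAlternating4

/-- Let `g : T₀ → T` be a proper continuous surjection of locally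
compact Hausdorff spaces which is at most `N`-to-one, `F` a sheaf of abelian groups on
`T`, and `F^{n,a}` the alternating subsheaves of `F^n = (g_n)_*(g_n^* F)` supported on
the free part.  Then `(F^{n,a})_n` is a subcomplex of `(F^n)_n` which vanishes in
degrees above `N`, and the augmented complex `0 → F → F^{0,a} → ⋯ → F^{N,a} → 0` is
exact.  Since exactness of a complex of sheaves means exactness at every stalk, and the
stalk of `F^{n,a}` at `t` is the alternating subgroup
`F^{n,a}_t ⊆ C(Z_t^{n+1}, F_t)` with `Z_t = g⁻¹(t)`, this is formalized at each stalk,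
which is the equivalent form stated in the claim. -/
theorem alternating_resolution_exact
    {T0 T : Type} [TopologicalSpace T0] [TopologicalSpace T]
    [T2Space T0] [LocallyCompactSpace T0] [T2Space T] [LocallyCompactSpace T]
    (g : T0 → T) (hc : Continuous g) (hp : IsProperMap g)
    (hsurj : Function.Surjective g) (N : ℕ)
    (hN : ∀ x : T, (g ⁻¹' {x}).Finite ∧ (g ⁻¹' {x}).ncard ≤ N)
    (F : AbEtaleSheaf T) (t : T) :
    -- `(F^{•,a})` is a subcomplex of `(F^•)`
    (∀ (n : ℕ) (φ : (Fin (n + 1) → ↥(g ⁻¹' {t})) → F.Stalk t),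
      φ ∈ alternatingSubgroup _ _ n →
        cosimplicialCoboundary _ _ n φ ∈ alternatingSubgroup _ _ (n + 1)) ∧
    -- it vanishes in degrees above `N`
    (∀ n : ℕ, N < n → alternatingSubgroup ↥(g ⁻¹' {t}) (F.Stalk t) n = ⊥) ∧
    -- the augmentation lands in `F^{0,a}_t` and is injective
    (∀ c : F.Stalk t, cosimplicialAugmentation ↥(g ⁻¹' {t}) _ c ∈
      alternatingSubgroup _ _ 0) ∧
    Function.Injective (cosimplicialAugmentation ↥(g ⁻¹' {t}) (F.Stalk t)) ∧
    -- exactness at `F^{0,a}_t`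
    (∀ φ ∈ alternatingSubgroup ↥(g ⁻¹' {t}) (F.Stalk t) 0,
      cosimplicialCoboundary _ _ 0 φ = 0 ↔
        ∃ c : F.Stalk t, φ = cosimplicialAugmentation _ _ c) ∧
    -- exactness at `F^{n+1,a}_t`
    (∀ (n : ℕ) (φ : (Fin (n + 2) → ↥(g ⁻¹' {t})) → F.Stalk t),
      φ ∈ alternatingSubgroup _ _ (n + 1) →
      (cosimplicialCoboundary _ _ (n + 1) φ = 0 ↔
        ∃ ψ ∈ alternatingSubgroup ↥(g ⁻¹' {t}) (F.Stalk t) n,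
          cosimplicialCoboundary _ _ n ψ = φ)) := by
  obtain ⟨x0, hx0⟩ := hsurj t
  haveI hne : Nonempty ↥(g ⁻¹' {t}) := ⟨⟨x0, hx0⟩⟩
  haveI hfin : Finite ↥(g ⁻¹' {t}) := (hN t).1.to_subtype
  refine ⟨?_, ?_, ?_, ?_, ?_, ?_⟩
  · intro n φ hφ
    exact coboundary_mem φ hφ
  · intro n hn
    apply alt_eq_bot
    have h1 := (hN t).2
    have h2 : Nat.card ↥(g ⁻¹' {t}) = (g ⁻¹' {t}).ncard := Nat.card_coe_set_eq _
    omega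
  · intro c
    exact aug_mem c
  · intro c c' h
    exact congrFun h (fun _ => ⟨x0, hx0⟩)
  · intro φ _
    exact exactness_zero φ
  · intro n φ hφ
    constructor
    · intro hd
      exact exactness_pos φ hφ hd
    · rintro ⟨ψ, _, rfl⟩
      funext f
      exact coboundary_coboundary ψ f
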